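/- Let H(x,y) = y²/2 − x²/2 + x⁴/4 (the eight-loop Hamiltonian). Then y³ dx = (12/7·H + 3/7·x²)·y dx − (3/7)·x y dH + d((1/7)·x y³) as polynomial 1-forms on ℝ². -/

import Mathlib

/-- partial derivative in the first variable -/
noncomputable def pdx (F : ℝ → ℝ → ℝ) (x y : ℝ) : ℝ := deriv (fun t => F t y) x

/-- partial derivative in the second variable -/
noncomputable def pdy (F : ℝ → ℝ → ℝ) (x y : ℝ) : ℝ := deriv (fun t => F x t) y

/-- eight-loop Hamiltonian -/
noncomputable def H (x y : ℝ) : ℝ := y^2/2 - x^2/2 + x^4/4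

/-- (iii1):  y³dx = (12/7·H + 3/7·x²)·y dx − (3/7)·xy·dH + d((1/7)·xy³) -/
theorem decomposition_iii1 : ∀ x y : ℝ,
    y^3 = (12/7 * H x y + 3/7 * x^2) * y - 3/7 * (x*y) * pdx H x y
      + pdx (fun x y => 1/7 * x * y^3) x y
  ∧ (0 : ℝ) = - (3/7) * (x*y) * pdy H x y + pdy (fun x y => 1/7 * x * y^3) x y := by
  intro x y
  have h1 : pdx H x y = -x + x^3 := by
    unfold pdx H
    have : HasDerivAt (fun t : ℝ => y^2/2 - t^2/2 + t^4/4) (-x + x^3) x := by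
      have := ((hasDerivAt_const x (y^2/2)).sub ((hasDerivAt_pow 2 x).div_const 2)).add
        ((hasDerivAt_pow 4 x).div_const 4)
      refine this.congr_deriv ?_
      norm_num
    exact this.deriv
  have h2 : pdy H x y = y := by
    unfold pdy H
    have : HasDerivAt (fun t : ℝ => t^2/2 - x^2/2 + x^4/4) y y := by
      have := (((hasDerivAt_pow 2 y).div_const 2).sub (hasDerivAt_const y (x^2/2))).add
        (hasDerivAt_const y (x^4/4))
      refine this.congr_deriv ?_
      norm_num
    exact this.deriv
  have h3 : pdx (fun x y => 1/7 * x * y^3) x y = 1/7 * y^3 := by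
    unfold pdx
    have : HasDerivAt (fun t : ℝ => 1/7 * t * y^3) (1/7 * y^3) x := by
      have h := (hasDerivAt_id x).const_mul (1/7 * y^3)
      simp only [id_eq, mul_one] at h
      have hfun : (fun t : ℝ => 1/7 * t * y^3) = fun t => (1/7 * y^3) * t := by
        funext t; ring
      rw [hfun]; exact h
    exact this.deriv
  have h4 : pdy (fun x y => 1/7 * x * y^3) x y = 3/7 * x * y^2 := by
    unfold pdy
    have : HasDerivAt (fun t : ℝ => 1/7 * x * t^3) (3/7 * x * y^2) y := by
      have := (hasDerivAt_pow 3 y).const_mul (1/7 * x)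
      refine this.congr_deriv ?_
      norm_num; ring
    exact this.deriv
  rw [h1, h2, h3, h4]
  unfold H
  constructor <;> ring
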